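/- Let s ≥ 2 be an integer and γ ∈ ℝ, and let A = {y ∈ ℝ^s : y_1 + ⋯ + y_s = γ}. Then the s functions obtained by restricting E_0, E_2, E_3, …, E_s to A (i.e., the constant function 1 together with the restrictions of the elementary symmetric polynomials of degrees 2 through s) are linearly independent in the real vector space of functions from A to ℝ. -/

import Mathlib

/-- The `j`-th elementary symmetric polynomial of `y : Fin s → ℝ`
(`E 0 = 1`, `E j = 0` for `j > s`). -/
noncomputable def esymm (s j : ℕ) (y : Fin s → ℝ) : ℝ :=
  ∑ t ∈ Finset.powersetCard j (Finset.univ : Finset (Fin s)), ∏ i ∈ t, y i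

lemma esymm_replicate (m : ℕ) (t : ℝ) (j : ℕ) :
    (Multiset.replicate m t).esymm j = m.choose j * t ^ j := by
  unfold Multiset.esymm
  rw [Multiset.map_congr rfl (fun x hx => ?_), Multiset.map_const, Multiset.sum_replicate,
    Multiset.card_powersetCard, Multiset.card_replicate, nsmul_eq_mul]
  obtain ⟨hle, hc⟩ := Multiset.mem_powersetCard.mp hx
  show x.prod = t ^ j
  have hx2 : x = Multiset.replicate j t := by
    rw [← hc]
    exact Multiset.eq_replicate_card.mpr
      (fun b hb => Multiset.eq_of_mem_replicate (Multiset.mem_of_le hle hb))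
  rw [hx2, Multiset.prod_replicate]

lemma esymm_cons (c : ℝ) (S : Multiset ℝ) (j : ℕ) :
    (c ::ₘ S).esymm (j + 1) = S.esymm (j + 1) + c * S.esymm j := by
  unfold Multiset.esymm
  rw [Multiset.powersetCard_cons, Multiset.map_add, Multiset.sum_add, Multiset.map_map]
  congr 1
  rw [Multiset.sum_map_mul_left.symm]
  exact congrArg _ (Multiset.map_congr rfl fun x _ => by simp)

lemma map_univ_cons (m : ℕ) (c t : ℝ) :
    (Finset.univ.val.map (Fin.cons c (fun _ => t) : Fin (m+1) → ℝ))
      = c ::ₘ Multiset.replicate m t := by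
  rw [Fin.univ_succ, Finset.cons_val, Multiset.map_cons, Finset.map_val, Multiset.map_map]
  congr 1
  simp [Function.comp_def, Multiset.map_const', Finset.card_univ]

lemma esymm_point (m : ℕ) (c t : ℝ) (j : ℕ) :
    esymm (m+1) (j+1) (Fin.cons c (fun _ => t)) =
      (m.choose (j+1)) * t^(j+1) + c * ((m.choose j) * t^j) := by
  have h1 := Finset.esymm_map_val (Fin.cons c (fun _ => t) : Fin (m+1) → ℝ) Finset.univ (j+1)
  unfold esymm
  rw [← h1, map_univ_cons, esymm_cons, esymm_replicate, esymm_replicate]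

lemma esymm_zero_eq (s : ℕ) (y : Fin s → ℝ) : esymm s 0 y = 1 := by
  simp [esymm]

lemma choose_lt (m k : ℕ) (hm : 1 ≤ m) (hk : 2 ≤ k) (hks : k ≤ m + 1) :
    m.choose k < m * m.choose (k - 1) := by
  obtain ⟨l, rfl⟩ : ∃ l, k = l + 1 := ⟨k - 1, by omega⟩
  have h1 : m.choose (l+1) * (l+1) = m.choose l * (m - l) := Nat.choose_succ_right_eq m l
  have hpos : 0 < m.choose l := Nat.choose_pos (by omega)
  simp only [Nat.add_sub_cancel]
  nlinarith [Nat.sub_le m l, h1, hpos, hk]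

/-- On the hyperplane `A = {y ∈ ℝˢ : y₁ + ⋯ + y_s = γ}` (for `s ≥ 2`), the `s`
functions `E₀ = 1, E₂, E₃, …, E_s` (restricted to `A`) are linearly independent
in the space of real-valued functions on `A`. -/
theorem esymm_restrictions_linearIndependent (s : ℕ) (hs : 2 ≤ s) (γ : ℝ) :
    LinearIndependent ℝ
      (fun (j : (insert 0 (Finset.Icc 2 s) : Finset ℕ)) =>
        (fun y : {y : Fin s → ℝ // ∑ i, y i = γ} => esymm s j.val y.val)) := by
  obtain ⟨m, rfl⟩ : ∃ m, s = m + 1 := ⟨s - 1, by omega⟩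
  have hm : 1 ≤ m := by omega
  rw [Fintype.linearIndependent_iff]
  intro g hg
  set G : ℕ → ℝ := fun j =>
    if h : j ∈ (insert 0 (Finset.Icc 2 (m+1)) : Finset ℕ) then g ⟨j, h⟩ else 0 with hG
  have hGg : ∀ i : ↥(insert 0 (Finset.Icc 2 (m+1)) : Finset ℕ), G ↑i = g i := by
    intro i
    rw [hG]
    simp [i.2]
  -- the curve in A
  have hy : ∀ t : ℝ, ∑ i, (Fin.cons (γ - m*t) (fun _ => t) : Fin (m+1) → ℝ) i = γ := by
    intro t
    rw [Fin.sum_cons]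
    simp [Finset.sum_const, Finset.card_univ]
  have hz : ∀ t : ℝ, ∑ j ∈ (insert 0 (Finset.Icc 2 (m+1)) : Finset ℕ),
      G j * esymm (m+1) j (Fin.cons (γ - m*t) (fun _ => t)) = 0 := by
    intro t
    have h0 := congrFun hg ⟨Fin.cons (γ - m*t) (fun _ => t), hy t⟩
    rw [Finset.sum_apply] at h0
    simp only [Pi.smul_apply, smul_eq_mul, Pi.zero_apply] at h0
    rw [← Finset.sum_coe_sort (insert 0 (Finset.Icc 2 (m+1)) : Finset ℕ)
      (fun j => G j * esymm (m+1) j (Fin.cons (γ - m*t) (fun _ => t)))]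
    rw [← h0]
    exact Finset.sum_congr rfl fun i _ => by rw [hGg i]
  -- the polynomial
  set a : ℕ → ℝ := fun j => (m.choose j : ℝ) - m * m.choose (j-1) with ha
  set b : ℕ → ℝ := fun j => γ * m.choose (j-1) with hb
  set P : Polynomial ℝ := Polynomial.C (G 0) + ∑ j ∈ Finset.Icc 2 (m+1),
      Polynomial.C (G j) * (Polynomial.C (a j) * Polynomial.X ^ j
        + Polynomial.C (b j) * Polynomial.X ^ (j-1)) with hP
  have hPeval : ∀ t : ℝ, P.eval t = 0 := by
    intro t
    rw [← hz t, Finset.sum_insert (by simp), esymm_zero_eq, hP]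
    simp only [Polynomial.eval_add, Polynomial.eval_C, Polynomial.eval_finset_sum,
      Polynomial.eval_mul, Polynomial.eval_pow, Polynomial.eval_X, mul_one]
    congr 1
    refine Finset.sum_congr rfl fun j hj => ?_
    obtain ⟨h2, hle⟩ := Finset.mem_Icc.mp hj
    obtain ⟨k, rfl⟩ : ∃ k, j = k + 1 := ⟨j - 1, by omega⟩
    rw [esymm_point m (γ - m*t) t k, ha, hb]
    simp only [Nat.add_sub_cancel]
    ring
  have hP0 : P = 0 := by
    apply Polynomial.funext
    intro t
    rw [hPeval t, Polynomial.eval_zero]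
  have hcoeff : ∀ k : ℕ,
      (if k = 0 then G 0 else 0)
        + ((if k ∈ Finset.Icc 2 (m+1) then G k * a k else 0)
          + (if k + 1 ∈ Finset.Icc 2 (m+1) then G (k+1) * b (k+1) else 0)) = 0 := by
    intro k
    have h := congrArg (fun p => Polynomial.coeff p k) hP0
    rw [hP] at h
    simp only [Polynomial.coeff_add, Polynomial.finset_sum_coeff, Polynomial.coeff_C,
      Polynomial.coeff_C_mul, Polynomial.coeff_X_pow, Polynomial.coeff_zero,
      mul_ite, mul_one, mul_zero, mul_add] at h
    rw [Finset.sum_add_distrib] at h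
    rw [Finset.sum_ite_eq (Finset.Icc 2 (m+1)) k (fun j => G j * a j)] at h
    rw [show (∑ x ∈ Finset.Icc 2 (m+1), if k = x - 1 then G x * b x else 0)
        = ∑ x ∈ Finset.Icc 2 (m+1), if x = k + 1 then G x * b x else 0 from
      Finset.sum_congr rfl fun x hx => by
        have h2 := (Finset.mem_Icc.mp hx).1
        have hiff : (k = x - 1) ↔ (x = k + 1) := by omega
        simp only [hiff]] at h
    rw [Finset.sum_ite_eq' (Finset.Icc 2 (m+1)) (k+1) (fun j => G j * b j)] at h
    exact h
  have haneq : ∀ k, 2 ≤ k → k ≤ m + 1 → a k ≠ 0 := by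
    intro k h2 hks
    have h := choose_lt m k hm h2 hks
    have h' : (m.choose k : ℝ) < (m : ℝ) * (m.choose (k-1) : ℝ) := by exact_mod_cast h
    rw [ha]
    simp only
    intro hc
    linarith [sub_eq_zero.mp hc]
  have hGIcc : ∀ d k, k + d = m + 1 → 2 ≤ k → G k = 0 := by
    intro d
    induction d with
    | zero =>
      intro k hk h2
      have h := hcoeff k
      rw [if_neg (by omega), if_pos (Finset.mem_Icc.mpr ⟨h2, by omega⟩),
        if_neg (by simp [Finset.mem_Icc]; omega)] at h
      have hne := haneq k h2 (by omega)
      have hGk : G k * a k = 0 := by linarith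
      rcases mul_eq_zero.mp hGk with h' | h'
      · exact h'
      · exact absurd h' hne
    | succ d ih =>
      intro k hk h2
      have hnext : G (k+1) = 0 := ih (k+1) (by omega) (by omega)
      have h := hcoeff k
      rw [if_neg (by omega), if_pos (Finset.mem_Icc.mpr ⟨h2, by omega⟩),
        if_pos (Finset.mem_Icc.mpr ⟨by omega, by omega⟩), hnext, zero_mul, add_zero] at h
      have hne := haneq k h2 (by omega)
      have hGk : G k * a k = 0 := by linarith
      rcases mul_eq_zero.mp hGk with h' | h'
      · exact h'
      · exact absurd h' hne
  have hG0 : G 0 = 0 := by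
    have h := hcoeff 0
    rw [if_pos rfl, if_neg (by simp), if_neg (by simp)] at h
    linarith
  intro i
  obtain ⟨j, hj⟩ := i
  rw [← hGg ⟨j, hj⟩]
  rcases Finset.mem_insert.mp hj with h | h
  · show G j = 0
    rw [h]; exact hG0
  · obtain ⟨h2, hle⟩ := Finset.mem_Icc.mp h
    exact hGIcc (m + 1 - j) j (by omega) h2
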